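/- Let ι be a nonempty finite type, β a type, and K = ℓ²(ι × β, ℂ). Let ρ and ρ' be states on K. Then ρ|₀ = ρ'|₀ if and only if for every bounded linear operator B on K localized in the first factor, Tr(Bρ) = Tr(Bρ'). -/

import Mathlib

open scoped ComplexConjugate
open Classical

noncomputable section

variable {ι β : Type}

/-- The Hilbert space `ℓ²(ι × β, ℂ)`. -/
abbrev K (ι β : Type) : Type := lp (fun _ : ι × β => ℂ) 2

/-- Canonical basis vector. -/
def e (u : ι) (v : β) : K ι β := lp.single 2 (u, v) 1

/-- `B` is localized in the first factor. -/
def LocalizedFst (B : K ι β →L[ℂ] K ι β) : Prop :=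
  ∃ b : ι → ι → ℂ, ∀ (u u' : ι) (v v' : β),
    (inner ℂ (e u v) (B (e u' v')) : ℂ) = if v = v' then b u u' else 0

/-- A state: countable convex combination of an orthonormal family of pure states. -/
structure State (H : Type) [NormedAddCommGroup H] [InnerProductSpace ℂ H] where
  ψ : ℕ → H
  p : ℕ → ℝ
  nonneg : ∀ k, 0 ≤ p k
  sum_one : HasSum p 1
  ortho : ∀ j k, p j ≠ 0 → p k ≠ 0 → (inner ℂ (ψ j) (ψ k) : ℂ) = if j = k then 1 else 0

/-- Reduction of a state to the first factor. -/
def red0 (ρ : State (K ι β)) : ι → ι → ℂ := fun u u' =>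
  ∑' k, (ρ.p k : ℂ) * ∑' v : β, (ρ.ψ k) (u, v) * conj ((ρ.ψ k) (u', v))

/-- `Tr(Bρ)`. -/
def trB (B : K ι β →L[ℂ] K ι β) (ρ : State (K ι β)) : ℂ :=
  ∑' k, (ρ.p k : ℂ) * (inner ℂ (ρ.ψ k) (B (ρ.ψ k)) : ℂ)

lemma e_apply (u : ι) (v : β) (p : ι × β) : (e u v) p = if p = (u, v) then 1 else 0 := by
  by_cases h : p = (u, v) <;> simp [e, lp.single_apply, h]

lemma inner_e (u : ι) (v : β) (x : K ι β) : (inner ℂ (e u v) x : ℂ) = x (u, v) := by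
  rw [e, lp.inner_single_left]
  simp [RCLike.inner_apply]

lemma summable_sq (ψ : K ι β) : Summable (fun p : ι × β => ‖ψ p‖ ^ 2) := by
  have h := (lp.memℓp ψ).summable (by norm_num : (0:ℝ) < (2 : ENNReal).toReal)
  refine h.congr fun p => ?_
  rw [show (2:ENNReal).toReal = ((2:ℕ):ℝ) by norm_num, Real.rpow_natCast]

lemma tsum_sq_eq (ψ : K ι β) : ∑' p : ι × β, ‖ψ p‖ ^ 2 = ‖ψ‖ ^ 2 := by
  have h := lp.norm_rpow_eq_tsum (by norm_num : (0:ℝ) < (2 : ENNReal).toReal) ψ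
  rw [show (2:ENNReal).toReal = ((2:ℕ):ℝ) by norm_num] at h
  simp only [Real.rpow_natCast] at h
  exact_mod_cast h.symm

lemma mk_inj (u : ι) : Function.Injective (fun v : β => ((u, v) : ι × β)) :=
  fun v w h => by simpa using congrArg Prod.snd h

lemma summable_sq_fiber (ψ : K ι β) (u : ι) : Summable (fun v : β => ‖ψ (u, v)‖ ^ 2) :=
  (summable_sq ψ).comp_injective (mk_inj u)

lemma tsum_sq_fiber_le (ψ : K ι β) (u : ι) : ∑' v : β, ‖ψ (u, v)‖ ^ 2 ≤ ‖ψ‖ ^ 2 := by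
  rw [← tsum_sq_eq ψ]
  exact (summable_sq_fiber ψ u).tsum_le_tsum_of_inj _ (mk_inj u) (fun p _ => sq_nonneg _) (fun v => le_refl _)
    (summable_sq ψ)

lemma bound_aux {a b : ℝ} (ha : 0 ≤ a) (hb : 0 ≤ b) : a * b ≤ (a ^ 2 + b ^ 2) / 2 := by
  nlinarith [sq_nonneg (a - b)]

lemma norm_mul_le_aux (ψ : K ι β) (u u' : ι) (v : β) :
    ‖conj (ψ (u, v)) * ψ (u', v)‖ ≤ (‖ψ (u, v)‖ ^ 2 + ‖ψ (u', v)‖ ^ 2) / 2 := by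
  rw [norm_mul, RCLike.norm_conj]
  exact bound_aux (norm_nonneg _) (norm_nonneg _)

lemma summable_mul_fiber (ψ : K ι β) (u u' : ι) :
    Summable (fun v : β => conj (ψ (u, v)) * ψ (u', v)) :=
  Summable.of_norm_bounded (((summable_sq_fiber ψ u).add (summable_sq_fiber ψ u')).div_const 2)
    (norm_mul_le_aux ψ u u')

lemma norm_tsum_mul_le (ψ : K ι β) (u u' : ι) :
    ‖∑' v : β, conj (ψ (u, v)) * ψ (u', v)‖ ≤ ‖ψ‖ ^ 2 := by
  have hmaj : Summable (fun v : β => (‖ψ (u, v)‖ ^ 2 + ‖ψ (u', v)‖ ^ 2) / 2) :=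
    ((summable_sq_fiber ψ u).add (summable_sq_fiber ψ u')).div_const 2
  have hnorm : Summable (fun v : β => ‖conj (ψ (u, v)) * ψ (u', v)‖) :=
    Summable.of_nonneg_of_le (fun v => norm_nonneg _) (norm_mul_le_aux ψ u u') hmaj
  calc ‖∑' v : β, conj (ψ (u, v)) * ψ (u', v)‖
      ≤ ∑' v : β, ‖conj (ψ (u, v)) * ψ (u', v)‖ := norm_tsum_le_tsum_norm hnorm
    _ ≤ ∑' v : β, (‖ψ (u, v)‖ ^ 2 + ‖ψ (u', v)‖ ^ 2) / 2 :=
        Summable.tsum_le_tsum (norm_mul_le_aux ψ u u') hnorm hmaj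
    _ = ((∑' v : β, ‖ψ (u, v)‖ ^ 2) + ∑' v : β, ‖ψ (u', v)‖ ^ 2) / 2 := by
        rw [tsum_div_const, Summable.tsum_add (summable_sq_fiber ψ u) (summable_sq_fiber ψ u')]
    _ ≤ (‖ψ‖ ^ 2 + ‖ψ‖ ^ 2) / 2 := by
        have h1 := tsum_sq_fiber_le ψ u
        have h2 := tsum_sq_fiber_le ψ u'
        linarith
    _ = ‖ψ‖ ^ 2 := by ring

section Shift
variable {ι β : Type}

def shiftFun (u₀ u₀' : ι) (ψ : K ι β) : (p : ι × β) → ℂ := fun p =>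
  if p.1 = u₀ then ψ (u₀', p.2) else 0

lemma pow_conv : ∀ x : ℝ, x ^ (2 : ENNReal).toReal = x ^ (2:ℕ) := fun x => by
  rw [show (2 : ENNReal).toReal = ((2:ℕ):ℝ) by norm_num, Real.rpow_natCast]

lemma memℓp_shift (u₀ u₀' : ι) (ψ : K ι β) : Memℓp (shiftFun u₀ u₀' ψ) 2 := by
  apply memℓp_gen
  have h0 : ∀ p ∉ Set.range (fun v : β => ((u₀, v) : ι × β)),
      ‖shiftFun u₀ u₀' ψ p‖ ^ (2 : ENNReal).toReal = 0 := by
    intro p hp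
    have h1 : p.1 ≠ u₀ := fun h => hp ⟨p.2, by simp [← h]⟩
    rw [pow_conv]
    simp [shiftFun, h1]
  rw [← (mk_inj u₀).summable_iff h0]
  refine (summable_sq_fiber ψ u₀').congr fun v => ?_
  rw [Function.comp_apply, pow_conv]
  simp [shiftFun]

def shiftVec (u₀ u₀' : ι) (ψ : K ι β) : K ι β := ⟨shiftFun u₀ u₀' ψ, memℓp_shift u₀ u₀' ψ⟩

lemma shiftVec_apply (u₀ u₀' : ι) (ψ : K ι β) (p : ι × β) :
    (shiftVec u₀ u₀' ψ) p = if p.1 = u₀ then ψ (u₀', p.2) else 0 := rfl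

lemma shiftVec_norm_le (u₀ u₀' : ι) (ψ : K ι β) : ‖shiftVec u₀ u₀' ψ‖ ≤ ‖ψ‖ := by
  apply lp.norm_le_of_tsum_le (by norm_num : (0:ℝ) < (2 : ENNReal).toReal) (norm_nonneg _)
  simp only [pow_conv]
  have hsupp : (Function.support fun p : ι × β => ‖(shiftVec u₀ u₀' ψ) p‖ ^ (2:ℕ))
      ⊆ Set.range (fun v : β => ((u₀, v) : ι × β)) := by
    intro p hp
    by_contra hr
    have h1 : p.1 ≠ u₀ := fun h => hr ⟨p.2, by simp [← h]⟩
    apply hp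
    simp [shiftVec_apply, h1]
  rw [← (mk_inj u₀).tsum_eq hsupp]
  calc ∑' (v : β), ‖(shiftVec u₀ u₀' ψ) ((fun v : β => ((u₀, v) : ι × β)) v)‖ ^ (2:ℕ)
      = ∑' (v : β), ‖ψ (u₀', v)‖ ^ 2 := tsum_congr fun v => by simp [shiftVec_apply]
    _ ≤ ‖ψ‖ ^ 2 := tsum_sq_fiber_le ψ u₀'

end Shift
section ShiftOp
variable {ι β : Type}

def shiftOp (u₀ u₀' : ι) : K ι β →L[ℂ] K ι β :=
  LinearMap.mkContinuous
    { toFun := fun ψ => shiftVec u₀ u₀' ψ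
      map_add' := fun ψ χ => lp.ext (funext fun p => by
        simp only [shiftVec_apply, lp.coeFn_add, Pi.add_apply]
        split_ifs <;> simp)
      map_smul' := fun c ψ => lp.ext (funext fun p => by
        simp only [shiftVec_apply, lp.coeFn_smul, Pi.smul_apply, RingHom.id_apply,
          smul_eq_mul]
        split_ifs <;> simp) }
    1 (fun ψ => by simpa using shiftVec_norm_le u₀ u₀' ψ)

lemma shiftOp_apply (u₀ u₀' : ι) (ψ : K ι β) (p : ι × β) :
    (shiftOp u₀ u₀' ψ) p = if p.1 = u₀ then ψ (u₀', p.2) else 0 := rfl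

lemma shiftOp_inner (u₀ u₀' : ι) (u u' : ι) (v v' : β) :
    (inner ℂ (e u v) (shiftOp u₀ u₀' (e u' v')) : ℂ)
      = if v = v' then (if u = u₀ ∧ u' = u₀' then (1:ℂ) else 0) else 0 := by
  rw [inner_e, shiftOp_apply, e_apply]
  by_cases h1 : u = u₀ <;> by_cases h2 : u' = u₀' <;> by_cases h3 : v = v' <;>
    simp_all [Prod.ext_iff] <;> tauto

end ShiftOp
section Main
variable {ι β : Type} [Fintype ι]

lemma inner_B_apply (B : K ι β →L[ℂ] K ι β) (b : ι → ι → ℂ)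
    (hb : ∀ (u u' : ι) (v v' : β),
      (inner ℂ (e u v) (B (e u' v')) : ℂ) = if v = v' then b u u' else 0)
    (ψ : K ι β) (u' : ι) (v' : β) :
    (inner ℂ ψ (B (e u' v')) : ℂ) = ∑ u, b u u' * conj (ψ (u, v')) := by
  have hBe : ∀ p : ι × β, (B (e u' v')) p = if p.2 = v' then b p.1 u' else 0 := by
    intro p
    have := hb p.1 u' p.2 v'
    rwa [inner_e] at this
  rw [lp.inner_eq_tsum]
  have hterm : ∀ p : ι × β, (inner ℂ (ψ p) ((B (e u' v')) p) : ℂ)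
      = if p.2 = v' then conj (ψ p) * b p.1 u' else 0 := by
    intro p
    rw [RCLike.inner_apply', hBe p]
    split_ifs <;> simp
  rw [tsum_congr hterm]
  rw [tsum_eq_sum (s := Finset.univ ×ˢ {v'}) (by
    intro p hp
    have : p.2 ≠ v' := by
      intro h
      exact hp (Finset.mem_product.2 ⟨Finset.mem_univ _, Finset.mem_singleton.2 h⟩)
    simp [this])]
  rw [Finset.sum_product]
  refine Finset.sum_congr rfl fun u _ => ?_
  rw [Finset.sum_singleton]
  simp [mul_comm]

lemma inner_B_eq (B : K ι β →L[ℂ] K ι β) (b : ι → ι → ℂ)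
    (hb : ∀ (u u' : ι) (v v' : β),
      (inner ℂ (e u v) (B (e u' v')) : ℂ) = if v = v' then b u u' else 0)
    (ψ : K ι β) :
    (inner ℂ ψ (B ψ) : ℂ)
      = ∑ u, ∑ u', b u u' * ∑' v : β, conj (ψ (u, v)) * ψ (u', v) := by
  -- Step B
  have h1 : HasSum (fun p : ι × β => lp.single 2 p (ψ p)) ψ :=
    lp.hasSum_single ENNReal.ofNat_ne_top ψ
  have h2 : HasSum (fun p : ι × β => (inner ℂ ψ (B (lp.single 2 p (ψ p))) : ℂ))
      (inner ℂ ψ (B ψ) : ℂ) := by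
    have := h1.mapL ((innerSL ℂ ψ).comp B)
    simpa using this
  have hsingle : ∀ p : ι × β, lp.single 2 p (ψ p) = ψ p • e p.1 p.2 := by
    intro p
    rw [e, ← lp.single_smul, smul_eq_mul, mul_one]
  have h3 : HasSum (fun p : ι × β => ∑ u, b u p.1 * conj (ψ (u, p.2)) * ψ p)
      (inner ℂ ψ (B ψ) : ℂ) := by
    refine h2.congr_fun fun p => ?_
    rw [hsingle p, map_smul, inner_smul_right, inner_B_apply B b hb ψ p.1 p.2,
      Finset.mul_sum]
    exact Finset.sum_congr rfl fun u _ => by ring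
  -- Step C
  have hfiber : ∀ u u' : ι,
      HasSum (fun p : ι × β => if p.1 = u' then b u p.1 * conj (ψ (u, p.2)) * ψ p else 0)
        (b u u' * ∑' v : β, conj (ψ (u, v)) * ψ (u', v)) := by
    intro u u'
    rw [← (mk_inj u').hasSum_iff (by
      intro p hp
      have : p.1 ≠ u' := fun h => hp ⟨p.2, by simp [← h]⟩
      simp [this])]
    have : (fun p : ι × β => if p.1 = u' then b u p.1 * conj (ψ (u, p.2)) * ψ p else 0)
        ∘ (fun v : β => ((u', v) : ι × β))
        = fun v : β => b u u' * (conj (ψ (u, v)) * ψ (u', v)) := by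
      funext v
      simp [mul_assoc]
    rw [this]
    exact (summable_mul_fiber ψ u u').hasSum.mul_left _
  have hC : ∀ u : ι, HasSum (fun p : ι × β => b u p.1 * conj (ψ (u, p.2)) * ψ p)
      (∑ u', b u u' * ∑' v : β, conj (ψ (u, v)) * ψ (u', v)) := by
    intro u
    have := hasSum_sum (s := Finset.univ) (f := fun (u' : ι) (p : ι × β) =>
      if p.1 = u' then b u p.1 * conj (ψ (u, p.2)) * ψ p else 0) fun u' _ => hfiber u u'
    refine this.congr_fun fun p => ?_
    rw [Finset.sum_ite_eq Finset.univ p.1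
      (fun u' => b u p.1 * conj (ψ (u, p.2)) * ψ p)]
    simp
  exact ((hasSum_sum fun u _ => hC u).unique h3).symm
end Main
section Trace
variable {ι β : Type} [Fintype ι]

lemma conj_tsum' {γ : Type} (f : γ → ℂ) : conj (∑' x, f x) = ∑' x, conj (f x) := by
  simp only [starRingEnd_apply]
  exact tsum_star

lemma state_norm_one (ρ : State (K ι β)) (k : ℕ) (hk : ρ.p k ≠ 0) : ‖ρ.ψ k‖ = 1 := by
  have h := ρ.ortho k k hk hk
  rw [if_pos rfl] at h
  have h2 : ((‖ρ.ψ k‖ : ℂ)) ^ 2 = 1 := by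
    have h4 := inner_self_eq_norm_sq_to_K (𝕜 := ℂ) (ρ.ψ k)
    rw [h] at h4
    exact h4.symm
  have h3 : ‖ρ.ψ k‖ ^ 2 = (1 : ℝ) := by exact_mod_cast h2
  nlinarith [norm_nonneg (ρ.ψ k)]

lemma summable_pT (ρ : State (K ι β)) (u u' : ι) :
    Summable (fun k => (ρ.p k : ℂ) * ∑' v : β, conj ((ρ.ψ k) (u, v)) * (ρ.ψ k) (u', v)) := by
  apply Summable.of_norm_bounded ρ.sum_one.summable
  intro k
  by_cases hk : ρ.p k = 0
  · simp [hk]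
  · rw [norm_mul, Complex.norm_real, Real.norm_of_nonneg (ρ.nonneg k)]
    have h1 := norm_tsum_mul_le (ρ.ψ k) u u'
    rw [state_norm_one ρ k hk] at h1
    nlinarith [ρ.nonneg k]

lemma hT_eq (ρ : State (K ι β)) (u u' : ι) :
    (∑' k, (ρ.p k : ℂ) * ∑' v : β, conj ((ρ.ψ k) (u, v)) * (ρ.ψ k) (u', v))
      = conj (red0 ρ u u') := by
  rw [red0, conj_tsum']
  refine tsum_congr fun k => ?_
  rw [map_mul, Complex.conj_ofReal, conj_tsum']
  congr 1
  exact tsum_congr fun v => by simp [map_mul, mul_comm]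

lemma trB_eq (B : K ι β →L[ℂ] K ι β) (b : ι → ι → ℂ)
    (hb : ∀ (u u' : ι) (v v' : β),
      (inner ℂ (e u v) (B (e u' v')) : ℂ) = if v = v' then b u u' else 0)
    (ρ : State (K ι β)) :
    trB B ρ = ∑ u, ∑ u', b u u' * conj (red0 ρ u u') := by
  have hstep : ∀ k, (ρ.p k : ℂ) * (inner ℂ (ρ.ψ k) (B (ρ.ψ k)) : ℂ)
      = ∑ q : ι × ι, (ρ.p k : ℂ)
          * (b q.1 q.2 * ∑' v : β, conj ((ρ.ψ k) (q.1, v)) * (ρ.ψ k) (q.2, v)) := by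
    intro k
    rw [inner_B_eq B b hb, Finset.mul_sum,
      Fintype.sum_prod_type (f := fun q : ι × ι => (ρ.p k : ℂ)
        * (b q.1 q.2 * ∑' v : β, conj ((ρ.ψ k) (q.1, v)) * (ρ.ψ k) (q.2, v)))]
    exact Finset.sum_congr rfl fun u _ => by rw [Finset.mul_sum]
  have hsum : ∀ q : ι × ι, Summable (fun k => (ρ.p k : ℂ)
      * (b q.1 q.2 * ∑' v : β, conj ((ρ.ψ k) (q.1, v)) * (ρ.ψ k) (q.2, v))) := by
    intro q
    refine ((summable_pT ρ q.1 q.2).mul_left (b q.1 q.2)).congr fun k => ?_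
    ring
  calc trB B ρ
      = ∑' k, ∑ q : ι × ι, (ρ.p k : ℂ)
          * (b q.1 q.2 * ∑' v : β, conj ((ρ.ψ k) (q.1, v)) * (ρ.ψ k) (q.2, v)) :=
        tsum_congr hstep
    _ = ∑ q : ι × ι, ∑' k, (ρ.p k : ℂ)
          * (b q.1 q.2 * ∑' v : β, conj ((ρ.ψ k) (q.1, v)) * (ρ.ψ k) (q.2, v)) :=
        Summable.tsum_finsetSum fun q _ => hsum q
    _ = ∑ q : ι × ι, b q.1 q.2 * conj (red0 ρ q.1 q.2) := by
        refine Finset.sum_congr rfl fun q _ => ?_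
        rw [tsum_congr (fun k => by ring :
          ∀ k, (ρ.p k : ℂ) * (b q.1 q.2 * ∑' v : β, conj ((ρ.ψ k) (q.1, v)) * (ρ.ψ k) (q.2, v))
            = b q.1 q.2 * ((ρ.p k : ℂ) * ∑' v : β, conj ((ρ.ψ k) (q.1, v)) * (ρ.ψ k) (q.2, v))),
          tsum_mul_left, hT_eq]
    _ = ∑ u, ∑ u', b u u' * conj (red0 ρ u u') :=
        Fintype.sum_prod_type (f := fun q : ι × ι => b q.1 q.2 * conj (red0 ρ q.1 q.2))

end Trace

/-- two states have equal reductions to the first factor iff every bounded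
operator localized in the first factor has the same trace against them. -/
theorem red0_eq_iff_trace_eq_on_localized
    {ι β : Type} [Fintype ι] [Nonempty ι] (ρ ρ' : State (K ι β)) :
    red0 ρ = red0 ρ' ↔
      ∀ B : K ι β →L[ℂ] K ι β, LocalizedFst B → trB B ρ = trB B ρ' := by
  constructor
  · rintro h B ⟨b, hb⟩
    rw [trB_eq B b hb ρ, trB_eq B b hb ρ', h]
  · intro h
    funext u₀ u₀'
    have hb := shiftOp_inner (β := β) u₀ u₀'
    have hloc : LocalizedFst (shiftOp u₀ u₀' : K ι β →L[ℂ] K ι β) :=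
      ⟨fun u u' => if u = u₀ ∧ u' = u₀' then (1:ℂ) else 0, hb⟩
    have htr := h (shiftOp u₀ u₀') hloc
    rw [trB_eq _ _ hb ρ, trB_eq _ _ hb ρ'] at htr
    have hsimp : ∀ g : ι → ι → ℂ,
        (∑ u, ∑ u', (if u = u₀ ∧ u' = u₀' then (1:ℂ) else 0) * g u u') = g u₀ u₀' := by
      intro g
      have inner_eq : ∀ u : ι, (∑ u', (if u = u₀ ∧ u' = u₀' then (1:ℂ) else 0) * g u u')
          = if u = u₀ then g u u₀' else 0 := by
        intro u
        rw [Finset.sum_eq_single u₀' (fun b _ hb' => by simp [hb'])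
          (fun hmem => absurd (Finset.mem_univ u₀') hmem)]
        by_cases hu : u = u₀ <;> simp [hu]
      rw [Finset.sum_congr rfl fun u _ => inner_eq u,
        Finset.sum_eq_single u₀ (fun b _ hb' => by simp [hb'])
          (fun hmem => absurd (Finset.mem_univ u₀) hmem)]
      simp
    rw [hsimp, hsimp] at htr
    exact star_injective htr

end
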